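/- arXiv:2207.08921 — 5 statements merged into one kernel-verified Lean document; each statement's English description precedes it below -/
import Mathlib

section
/- For every holomorphic function ψ on the unit disk with ψ mapping into the closed unit disk (i.e., sup norm at most 1), one has sup over z in the disk of 2(1-|z|²)|ψ(z)||ψ'(z)| ≤ 4/(3√3) < 1. -/
open Metric Filter

/-- The open unit disk in ℂ. -/
noncomputable def unitDisk : Set ℂ := Metric.ball 0 1

/-- Supremum norm over the unit disk. -/
noncomputable def supNorm (f : ℂ → ℂ) : ℝ :=
  sSup ((fun z => ‖f z‖) '' unitDisk)

/-- Bloch seminorm over the unit disk. -/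
noncomputable def blochSemi (g : ℂ → ℂ) : ℝ :=
  sSup ((fun z => (1 - ‖z‖ ^ 2) * ‖deriv g z‖) '' unitDisk)

/-- Bloch norm over the unit disk. -/
noncomputable def blochNorm (g : ℂ → ℂ) : ℝ :=
  ‖g 0‖ + blochSemi g

open Complex in

lemma mob_lt_one {u v : ℂ} (hu : ‖u‖ < 1) (hv : ‖v‖ < 1) :
    ‖(u + v) / (1 + (starRingEnd ℂ) v * u)‖ < 1 := by
  have h1 : ‖(starRingEnd ℂ) v * u‖ < 1 := by
    rw [norm_mul, Complex.norm_conj]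
    nlinarith [norm_nonneg u, norm_nonneg v]
  have hden : (1 + (starRingEnd ℂ) v * u) ≠ 0 := by
    intro h
    have : (starRingEnd ℂ) v * u = -1 := by linear_combination h
    rw [this] at h1; simp at h1
  have hA : Complex.normSq u < 1 := by rw [← Complex.sq_norm]; nlinarith [norm_nonneg u]
  have hB : Complex.normSq v < 1 := by rw [← Complex.sq_norm]; nlinarith [norm_nonneg v]
  have key : Complex.normSq (1 + (starRingEnd ℂ) v * u) - Complex.normSq (u + v)
      = (1 - Complex.normSq u) * (1 - Complex.normSq v) := by
    simp [Complex.normSq_apply, Complex.add_re, Complex.add_im, Complex.mul_re, Complex.mul_im,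
      Complex.one_re, Complex.one_im]
    ring
  have hlt : Complex.normSq (u + v) < Complex.normSq (1 + (starRingEnd ℂ) v * u) := by
    nlinarith [key]
  rw [norm_div, div_lt_one (norm_pos_iff.mpr hden), Complex.norm_def, Complex.norm_def]
  exact Real.sqrt_lt_sqrt (Complex.normSq_nonneg _) hlt

open Complex in
private lemma mob_den_ne {u v : ℂ} (hu : ‖u‖ < 1) (hv : ‖v‖ < 1) :
    (1 + (starRingEnd ℂ) v * u) ≠ 0 := by
  intro h
  have h1 : ‖(starRingEnd ℂ) v * u‖ < 1 := by
    rw [norm_mul, Complex.norm_conj]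
    nlinarith [norm_nonneg u, norm_nonneg v]
  have : (starRingEnd ℂ) v * u = -1 := by linear_combination h
  rw [this] at h1; simp at h1

private lemma schwarz_pick {g : ℂ → ℂ} (hd : DifferentiableOn ℂ g (ball (0:ℂ) 1))
    (hg : ∀ z ∈ ball (0:ℂ) 1, ‖g z‖ < 1) {a : ℂ} (ha : a ∈ ball (0:ℂ) 1) :
    (1 - ‖a‖ ^ 2) * ‖deriv g a‖ ≤ 1 - ‖g a‖ ^ 2 := by
  have ha' : ‖a‖ < 1 := by simpa [Complex.norm_def] using mem_ball_zero_iff.mp ha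
  set b := g a with hbdef
  have hb : ‖b‖ < 1 := hg a ha
  set φ : ℂ → ℂ := fun ζ => (ζ + a) / (1 + (starRingEnd ℂ) a * ζ) with hφdef
  set m : ℂ → ℂ := fun w => (w + (-b)) / (1 + (starRingEnd ℂ) (-b) * w) with hmdef
  set h : ℂ → ℂ := fun ζ => m (g (φ ζ)) with hhdef
  have hφmaps : ∀ ζ ∈ ball (0:ℂ) 1, φ ζ ∈ ball (0:ℂ) 1 := fun ζ hζ => by
    rw [mem_ball_zero_iff]
    exact_mod_cast mob_lt_one (by simpa using mem_ball_zero_iff.mp hζ) ha'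
  have hmmaps : ∀ w : ℂ, ‖w‖ < 1 → m w ∈ ball (0:ℂ) 1 := fun w hw => by
    rw [mem_ball_zero_iff]
    exact_mod_cast mob_lt_one hw (by simpa using hb)
  have hφ0 : φ 0 = a := by simp [hφdef]
  have hh0 : h 0 = 0 := by simp [hhdef, hφ0, hmdef, hbdef]
  have hmaps : Set.MapsTo h (ball (0:ℂ) 1) (ball (h 0) 1) := by
    rw [hh0]
    intro ζ hζ
    exact hmmaps _ (hg _ (hφmaps ζ hζ))
  have hdh : DifferentiableOn ℂ h (ball (0:ℂ) 1) := by
    intro ζ hζ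
    have hζ' : ‖ζ‖ < 1 := by simpa using mem_ball_zero_iff.mp hζ
    have d1 : DifferentiableAt ℂ φ ζ :=
      (differentiableAt_id.add_const a).div
        ((differentiableAt_const _ |>.mul differentiableAt_id).const_add 1) (mob_den_ne hζ' ha')
    have d2 : DifferentiableAt ℂ g (φ ζ) :=
      hd.differentiableAt (isOpen_ball.mem_nhds (hφmaps ζ hζ))
    have hgφ : ‖g (φ ζ)‖ < 1 := hg _ (hφmaps ζ hζ)
    have d3 : DifferentiableAt ℂ m (g (φ ζ)) :=
      (differentiableAt_id.add_const (-b)).div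
        ((differentiableAt_const _ |>.mul differentiableAt_id).const_add 1)
        (mob_den_ne hgφ (by simpa using hb))
    exact ((d3.comp _ d2).comp _ d1).differentiableWithinAt
  -- derivative of φ at 0
  have hφd : HasDerivAt φ (1 - (Complex.normSq a : ℂ)) 0 := by
    have := ((hasDerivAt_id (0:ℂ)).add_const a).div
      (((hasDerivAt_id (0:ℂ)).const_mul ((starRingEnd ℂ) a)).const_add 1) (by simp)
    simp only [id_eq, zero_add, mul_zero, add_zero, one_mul, mul_one, one_pow, div_one] at this
    rwa [Complex.mul_conj] at this
  have hBd : (1 : ℂ) + (starRingEnd ℂ) (-b) * b = 1 - (Complex.normSq b : ℂ) := by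
    simp [Complex.mul_conj']
    ring_nf
    rw [mul_comm, Complex.mul_conj]
  have hBne : (1 : ℂ) - (Complex.normSq b : ℂ) ≠ 0 := by
    intro hcon
    have h1 : (Complex.normSq b : ℂ) = 1 := by linear_combination -hcon
    have h2 : Complex.normSq b = 1 := by exact_mod_cast h1
    nlinarith [Complex.sq_norm b, norm_nonneg b]
  have hmd : HasDerivAt m ((1 - (Complex.normSq b : ℂ))⁻¹) b := by
    have := ((hasDerivAt_id b).add_const (-b)).div
      (((hasDerivAt_id b).const_mul ((starRingEnd ℂ) (-b))).const_add 1) (by simp only [id_eq]; rw [hBd]; exact hBne)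
    simp only [add_neg_cancel, id_eq, mul_one, one_mul, zero_mul, sub_zero, hBd] at this
    refine this.congr_deriv ?_
    rw [pow_two, div_mul_cancel_right₀ hBne]
  have hgd : HasDerivAt g (deriv g a) a :=
    (hd.differentiableAt (isOpen_ball.mem_nhds ha)).hasDerivAt
  have hgd' : HasDerivAt g (deriv g a) (φ 0) := by rw [hφ0]; exact hgd
  have hcomp1 : HasDerivAt (fun ζ => g (φ ζ)) (deriv g a * (1 - (Complex.normSq a : ℂ))) 0 :=
    hgd'.comp 0 hφd
  have hmd' : HasDerivAt m ((1 - (Complex.normSq b : ℂ))⁻¹) (g (φ 0)) := by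
    rw [hφ0, ← hbdef]; exact hmd
  have hhd : HasDerivAt h ((1 - (Complex.normSq b : ℂ))⁻¹ *
      (deriv g a * (1 - (Complex.normSq a : ℂ)))) 0 := by have := hmd'.comp 0 hcomp1; exact this
  have hbound : ‖deriv h 0‖ ≤ 1 := by
    have := Complex.norm_deriv_le_div_of_mapsTo_ball hdh (hmaps.mono_right ball_subset_closedBall) one_pos
    simpa using this
  rw [hhd.deriv] at hbound
  have hA2 : ‖a‖ ^ 2 = Complex.normSq a := Complex.sq_norm a
  have hB2 : ‖b‖ ^ 2 = Complex.normSq b := Complex.sq_norm b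
  have hBlt : Complex.normSq b < 1 := by nlinarith [norm_nonneg b]
  have hAlt : Complex.normSq a < 1 := by nlinarith [norm_nonneg a]
  rw [norm_mul, norm_mul, norm_inv] at hbound
  have e1 : ‖1 - (Complex.normSq b : ℂ)‖ = 1 - Complex.normSq b := by
    rw [show (1:ℂ) - (Complex.normSq b : ℂ) = ((1 - Complex.normSq b : ℝ) : ℂ) by push_cast; ring,
      Complex.norm_real, Real.norm_eq_abs, abs_of_pos (by linarith)]
  have e2 : ‖1 - (Complex.normSq a : ℂ)‖ = 1 - Complex.normSq a := by
    rw [show (1:ℂ) - (Complex.normSq a : ℂ) = ((1 - Complex.normSq a : ℝ) : ℂ) by push_cast; ring,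
      Complex.norm_real, Real.norm_eq_abs, abs_of_pos (by linarith)]
  rw [e1, e2] at hbound
  rw [hA2, hB2]
  rw [inv_mul_le_iff₀ (by linarith)] at hbound
  nlinarith [hbound]

lemma cubic_bound {s : ℝ} (hs : 0 ≤ s) : 2 * s * (1 - s ^ 2) ≤ 4 / (3 * Real.sqrt 3) := by
  have hr : Real.sqrt 3 ^ 2 = 3 := Real.sq_sqrt (by norm_num)
  have hrpos : 0 < Real.sqrt 3 := Real.sqrt_pos.mpr (by norm_num)
  rw [le_div_iff₀ (by positivity)]
  have hid : 2 * (Real.sqrt 3 * s - 1) ^ 2 * (Real.sqrt 3 * s + 2)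
      = 4 - 2 * s * (1 - s ^ 2) * (3 * Real.sqrt 3) + 2 * s ^ 3 * Real.sqrt 3 * (Real.sqrt 3 ^ 2 - 3) := by
    ring
  have h0 : 2 * s ^ 3 * Real.sqrt 3 * (Real.sqrt 3 ^ 2 - 3) = 0 := by rw [hr]; ring
  have hnn : 0 ≤ 2 * (Real.sqrt 3 * s - 1) ^ 2 * (Real.sqrt 3 * s + 2) := by positivity
  linarith [hid, h0, hnn]

lemma const_lt : 4 / (3 * Real.sqrt 3) < 1 := by
  have hr : Real.sqrt 3 ^ 2 = 3 := Real.sq_sqrt (by norm_num)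
  have hrpos : 0 < Real.sqrt 3 := Real.sqrt_pos.mpr (by norm_num)
  rw [div_lt_one (by positivity)]
  nlinarith

theorem stmt_0 (ψ : ℂ → ℂ) (hψ : DifferentiableOn ℂ ψ unitDisk)
    (hb : ∀ z ∈ unitDisk, ‖ψ z‖ ≤ 1) :
    (∀ z ∈ unitDisk,
      2 * (1 - ‖z‖ ^ 2) * ‖ψ z‖ * ‖deriv ψ z‖
        ≤ 4 / (3 * Real.sqrt 3)) ∧ 4 / (3 * Real.sqrt 3) < 1 := by
  refine ⟨fun z hz => ?_, const_lt⟩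
  have hz' : z ∈ ball (0:ℂ) 1 := hz
  set L := 2 * (1 - ‖z‖ ^ 2) * ‖ψ z‖ * ‖deriv ψ z‖ with hL
  have key : ∀ t ∈ Set.Ioo (0:ℝ) 1, t ^ 2 * L ≤ 4 / (3 * Real.sqrt 3) := by
    intro t ht
    set g : ℂ → ℂ := fun w => (t : ℂ) * ψ w with hg
    have hgd : DifferentiableOn ℂ g (ball (0:ℂ) 1) := fun w hw =>
      ((hψ w hw).const_mul _)
    have hglt : ∀ w ∈ ball (0:ℂ) 1, ‖g w‖ < 1 := by
      intro w hw
      have := hb w hw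
      rw [hg]
      simp only [norm_mul, Complex.norm_real, Real.norm_eq_abs, abs_of_pos ht.1]
      nlinarith [ht.1, ht.2, norm_nonneg (ψ w)]
    have hsp := schwarz_pick hgd hglt hz'
    have hderiv : deriv g z = (t : ℂ) * deriv ψ z := by
      rw [hg]
      exact deriv_const_mul _ (hψ.differentiableAt (isOpen_ball.mem_nhds hz'))
    rw [hderiv] at hsp
    simp only [hg, norm_mul, Complex.norm_real, Real.norm_eq_abs, abs_of_pos ht.1] at hsp
    have hcub := cubic_bound (mul_nonneg ht.1.le (norm_nonneg (ψ z)))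
    have hx : ‖ψ z‖ ≤ 1 := hb z hz
    have hy : 0 ≤ ‖deriv ψ z‖ := norm_nonneg _
    have hx0 : 0 ≤ ‖ψ z‖ := norm_nonneg _
    have hr2 : ‖z‖ ^ 2 ≤ 1 := by
      have : ‖z‖ < 1 := by simpa using mem_ball_zero_iff.mp hz'
      nlinarith [norm_nonneg z]
    rw [hL]
    nlinarith [mul_le_mul_of_nonneg_left hsp (mul_nonneg (mul_nonneg (by norm_num : (0:ℝ) ≤ 2) ht.1.le) hx0), ht.1]
  -- limit t → 1⁻
  have htend : Tendsto (fun t : ℝ => t ^ 2 * L) (nhdsWithin 1 (Set.Iio 1)) (nhds L) := by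
    have : Tendsto (fun t : ℝ => t ^ 2 * L) (nhds 1) (nhds (1 ^ 2 * L)) :=
      (((continuous_pow 2).mul continuous_const).tendsto 1)
    simpa using this.mono_left nhdsWithin_le_nhds
  refine le_of_tendsto htend ?_
  filter_upwards [Ioo_mem_nhdsLT_of_mem (Set.mem_Ioc.mpr ⟨zero_lt_one, le_rfl⟩)] with t ht
  exact key t ht
end

section
/- If ψ is holomorphic on 𝔻 and the multiplication operator M_ψ : H^∞(𝔻) → 𝓑(𝔻), f ↦ ψf, is an isometry (with respect to ‖f‖_∞ on H^∞ and ‖g‖_𝓑 = |g(0)| + sup_z (1-|z|²)|g'(z)| on the Bloch space), then ψ(0) ≠ 0. -/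
open Metric Filter

lemma normSq_identity (w v : ℂ) :
    Complex.normSq (1 - (starRingEnd ℂ) w * v) - Complex.normSq (w - v)
      = (1 - Complex.normSq w) * (1 - Complex.normSq v) := by
  simp [Complex.normSq_apply, Complex.sub_re, Complex.sub_im, Complex.mul_re, Complex.mul_im]
  ring

lemma den_ne {w v : ℂ} (hw : ‖w‖ < 1) (hv : ‖v‖ ≤ 1) :
    (1 : ℂ) - (starRingEnd ℂ) w * v ≠ 0 := by
  intro h
  have h1 : (1 : ℂ) = (starRingEnd ℂ) w * v := by linear_combination h
  have := congrArg (‖·‖) h1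
  simp [norm_mul] at this
  nlinarith [norm_nonneg w, norm_nonneg v]

lemma mob_abs_lt {w v : ℂ} (hw : ‖w‖ < 1) (hv : ‖v‖ < 1) :
    ‖(w - v) / (1 - (starRingEnd ℂ) w * v)‖ < 1 := by
  have hd := den_ne hw hv.le
  have hnw : Complex.normSq w < 1 := by
    rw [← Complex.sq_norm]; nlinarith [norm_nonneg w]
  have hnv : Complex.normSq v < 1 := by
    rw [← Complex.sq_norm]; nlinarith [norm_nonneg v]
  rw [norm_div, div_lt_one (norm_pos_iff.mpr hd)]
  rw [Complex.norm_def, Complex.norm_def]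
  apply Real.sqrt_lt_sqrt (Complex.normSq_nonneg _)
  nlinarith [normSq_identity w v]

/-- Schwarz–Pick type inequality. -/
lemma schwarz_pick_s5 {ψ : ℂ → ℂ} (hψ : DifferentiableOn ℂ ψ (Metric.ball 0 1)) {m : ℝ}
    (hm : 0 < m) (hb : ∀ z ∈ Metric.ball (0:ℂ) 1, ‖ψ z‖ < m)
    {z₀ : ℂ} (hz₀ : z₀ ∈ Metric.ball (0:ℂ) 1) :
    (1 - ‖z₀‖ ^ 2) * ‖deriv ψ z₀‖ ≤ (m ^ 2 - ‖ψ z₀‖ ^ 2) / m := by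
  have hz₀' : ‖z₀‖ < 1 := by simpa [Complex.dist_eq] using hz₀
  set w₀ : ℂ := ψ z₀ / (m : ℂ) with hw₀def
  have hmC : ((m : ℝ) : ℂ) ≠ 0 := by exact_mod_cast hm.ne'
  have habs_m : ‖((m : ℝ) : ℂ)‖ = m := by
    rw [Complex.norm_real, Real.norm_eq_abs, abs_of_pos hm]
  have habsw₀ : ‖w₀‖ < 1 := by
    rw [hw₀def, norm_div, habs_m, div_lt_one hm]
    exact hb z₀ hz₀
  set τ : ℂ → ℂ := fun u => (z₀ - -u) / (1 - (starRingEnd ℂ) z₀ * -u) with hτdef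
  set q : ℂ → ℂ := fun u => ψ (τ u) / (m : ℂ) with hqdef
  set G : ℂ → ℂ := fun u => (w₀ - q u) / (1 - (starRingEnd ℂ) w₀ * q u) with hGdef
  have hτmem : ∀ u ∈ Metric.ball (0:ℂ) 1, τ u ∈ Metric.ball (0:ℂ) 1 := by
    intro u hu
    have hu' : ‖u‖ < 1 := by simpa [Complex.dist_eq] using hu
    have : ‖-u‖ < 1 := by simpa using hu'
    simpa [Complex.dist_eq, hτdef] using mob_abs_lt hz₀' this
  have hqlt : ∀ u ∈ Metric.ball (0:ℂ) 1, ‖q u‖ < 1 := by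
    intro u hu
    rw [hqdef]
    simp only [norm_div]
    rw [habs_m, div_lt_one hm]
    exact hb (τ u) (hτmem u hu)
  have hτ0 : τ 0 = z₀ := by simp [hτdef]
  have hq0 : q 0 = w₀ := by simp [hqdef, hτ0, hw₀def]
  have hG0 : G 0 = 0 := by simp [hGdef, hq0]
  -- differentiability of G on the ball
  have hτdiff : ∀ u ∈ Metric.ball (0:ℂ) 1, DifferentiableAt ℂ τ u := by
    intro u hu
    have hu' : ‖u‖ < 1 := by simpa [Complex.dist_eq] using hu
    have hden : (1 : ℂ) - (starRingEnd ℂ) z₀ * -u ≠ 0 :=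
      den_ne hz₀' (by simpa using hu'.le)
    exact ((differentiableAt_const _).sub (differentiableAt_id.neg)).div
      ((differentiableAt_const _).sub
        ((differentiableAt_const _).mul differentiableAt_id.neg)) hden
  have hqdiff : ∀ u ∈ Metric.ball (0:ℂ) 1, DifferentiableAt ℂ q u := by
    intro u hu
    have : DifferentiableAt ℂ (fun x => ψ (τ x)) u :=
      (hψ.differentiableAt (isOpen_ball.mem_nhds (hτmem u hu))).comp u (hτdiff u hu)
    exact this.div_const _
  have hGdiff : DifferentiableOn ℂ G (Metric.ball 0 1) := by
    intro u hu
    have hden : (1 : ℂ) - (starRingEnd ℂ) w₀ * q u ≠ 0 :=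
      den_ne habsw₀ (hqlt u hu).le
    exact (((differentiableAt_const _).sub (hqdiff u hu)).div
      ((differentiableAt_const _).sub
        ((differentiableAt_const _).mul (hqdiff u hu))) hden).differentiableWithinAt
  have hmaps : Set.MapsTo G (Metric.ball 0 1) (Metric.ball (G 0) 1) := by
    intro u hu
    rw [hG0]
    have hden : ‖q u‖ < 1 := hqlt u hu
    have := mob_abs_lt habsw₀ hden
    simpa [Complex.dist_eq, hGdef] using this
  -- derivative of G at 0
  set d : ℂ := deriv ψ z₀ with hddef
  have hψ' : HasDerivAt ψ d z₀ :=
    (hψ.differentiableAt (isOpen_ball.mem_nhds hz₀)).hasDerivAt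
  have h0mem : (0:ℂ) ∈ Metric.ball (0:ℂ) 1 := by simp
  have hτhd : HasDerivAt τ (1 - z₀ * (starRingEnd ℂ) z₀) 0 := by
    have h1 : HasDerivAt (fun u : ℂ => z₀ - -u) 1 0 := by
      simpa using ((hasDerivAt_id (0:ℂ)).neg.const_sub z₀)
    have h2 : HasDerivAt (fun u : ℂ => 1 - (starRingEnd ℂ) z₀ * -u) ((starRingEnd ℂ) z₀) 0 := by
      simpa using (((hasDerivAt_id (0:ℂ)).neg.const_mul ((starRingEnd ℂ) z₀)).const_sub 1)
    have hden : (1 : ℂ) - (starRingEnd ℂ) z₀ * -(0:ℂ) ≠ 0 := by simp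
    have := h1.fun_div h2 hden
    simpa [hτdef] using this
  have hψτ : HasDerivAt (fun u => ψ (τ u)) (d * (1 - z₀ * (starRingEnd ℂ) z₀)) 0 := by
    have hψ'' : HasDerivAt ψ d (τ 0) := by rw [hτ0]; exact hψ'
    exact hψ''.comp 0 hτhd
  set q' : ℂ := d * (1 - z₀ * (starRingEnd ℂ) z₀) / (m : ℂ) with hq'def
  have hqhd : HasDerivAt q q' 0 := hψτ.div_const _
  have hAden : (1 : ℂ) - (starRingEnd ℂ) w₀ * q 0 ≠ 0 := by
    rw [hq0]; exact den_ne habsw₀ habsw₀.le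
  have hGhd := ((hqhd.const_sub w₀).fun_div
    ((hqhd.const_mul ((starRingEnd ℂ) w₀)).const_sub 1) hAden)
  have hGval : HasDerivAt G (-q' / (1 - (starRingEnd ℂ) w₀ * w₀)) 0 := by
    refine hGhd.congr_deriv ?_
    simp only [hq0]
    have hden := den_ne habsw₀ habsw₀.le
    field_simp
    ring
  -- Schwarz lemma
  have hSch := Complex.norm_deriv_le_div_of_mapsTo_ball hGdiff (hmaps.mono_right ball_subset_closedBall) one_pos
  rw [hGval.deriv] at hSch
  -- compute the absolute value
  have e1 : (1:ℂ) - (starRingEnd ℂ) w₀ * w₀ = ((1 - Complex.normSq w₀ : ℝ) : ℂ) := by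
    rw [mul_comm, Complex.mul_conj]; push_cast; ring
  have hnw : Complex.normSq w₀ < 1 := by
    rw [← Complex.sq_norm]; nlinarith [norm_nonneg w₀]
  have e2 : ‖-q' / (1 - (starRingEnd ℂ) w₀ * w₀)‖
      = (‖d‖ * (1 - Complex.normSq z₀) / m) / (1 - Complex.normSq w₀) := by
    rw [norm_div, e1, norm_neg, hq'def, norm_div, norm_mul]
    have e3 : (1:ℂ) - z₀ * (starRingEnd ℂ) z₀ = ((1 - Complex.normSq z₀ : ℝ) : ℂ) := by
      rw [Complex.mul_conj]; push_cast; ring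
    have hnz : Complex.normSq z₀ < 1 := by
      rw [← Complex.sq_norm]; nlinarith [norm_nonneg z₀]
    have hnz' : (0:ℝ) < 1 - Complex.normSq z₀ := by linarith
    have hnw' : (0:ℝ) < 1 - Complex.normSq w₀ := by linarith
    rw [e3]
    simp only [Complex.norm_real, Real.norm_eq_abs]
    rw [abs_of_pos hnz', abs_of_pos hnw', abs_of_pos hm]
  rw [e2] at hSch
  have hnsw : Complex.normSq w₀ = Complex.normSq (ψ z₀) / m ^ 2 := by
    rw [hw₀def, Complex.normSq_div]
    norm_cast
    rw [Complex.normSq_ofReal]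
    ring_nf
  have hfin : ‖d‖ * (1 - Complex.normSq z₀) ≤ m * (1 - Complex.normSq w₀) := by
    have h1mnw : 0 < 1 - Complex.normSq w₀ := by linarith
    norm_num at hSch
    rw [div_le_one h1mnw, div_le_iff₀ hm] at hSch
    linarith [hSch]
  rw [Complex.sq_norm, Complex.sq_norm]
  rw [hnsw] at hfin
  have : m * (1 - Complex.normSq (ψ z₀) / m ^ 2) = (m ^ 2 - Complex.normSq (ψ z₀)) / m := by
    field_simp
  rw [this] at hfin
  linarith [hfin]


theorem stmt_5 (ψ : ℂ → ℂ) (hψ : DifferentiableOn ℂ ψ unitDisk)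
    (hiso : ∀ f : ℂ → ℂ, DifferentiableOn ℂ f unitDisk →
      BddAbove ((fun z => ‖f z‖) '' unitDisk) →
      blochNorm (fun z => ψ z * f z) = supNorm f) :
    ψ 0 ≠ 0 := by
  intro h0
  have hdisk : unitDisk = Metric.ball (0:ℂ) 1 := rfl
  have hopen : IsOpen unitDisk := by rw [hdisk]; exact isOpen_ball
  have h0mem : (0:ℂ) ∈ unitDisk := by rw [hdisk]; simp
  have hmem : ∀ {z : ℂ}, z ∈ unitDisk ↔ ‖z‖ < 1 := by
    intro z; rw [hdisk]; simp [Complex.dist_eq]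
  -- Step 1: |ψ a| ≤ 1 for all a in the disk
  have key1 : ∀ a ∈ unitDisk, ‖ψ a‖ ≤ 1 := by
    intro a ha
    by_cases haz : a = 0
    · simp [haz, h0]
    have ha' : ‖a‖ < 1 := hmem.mp ha
    set f : ℂ → ℂ := fun z => (a - z) / (1 - (starRingEnd ℂ) a * z) with hfdef
    have hfd : DifferentiableOn ℂ f unitDisk := by
      intro z hz
      have hz' : ‖z‖ < 1 := hmem.mp hz
      have hden : (1 : ℂ) - (starRingEnd ℂ) a * z ≠ 0 := den_ne ha' hz'.le
      exact (((differentiableAt_const _).sub differentiableAt_fun_id).div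
        ((differentiableAt_const _).sub
          ((differentiableAt_const ((starRingEnd ℂ) a)).mul differentiableAt_fun_id)) hden).differentiableWithinAt
    have hflt : ∀ z ∈ unitDisk, ‖f z‖ < 1 := by
      intro z hz
      exact mob_abs_lt ha' (hmem.mp hz)
    have hfb : BddAbove ((fun z => ‖f z‖) '' unitDisk) := by
      refine ⟨1, ?_⟩
      rintro _ ⟨z, hz, rfl⟩
      exact (hflt z hz).le
    have heq := hiso f hfd hfb
    have hsupub : supNorm f ≤ 1 := by
      rw [supNorm]
      refine csSup_le ⟨_, ⟨0, h0mem, rfl⟩⟩ ?_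
      rintro _ ⟨z, hz, rfl⟩
      exact (hflt z hz).le
    simp only [blochNorm, blochSemi] at heq
    rw [show (ψ 0 * f 0) = 0 by rw [h0]; ring, norm_zero, zero_add] at heq
    set S := ((fun z => (1 - ‖z‖ ^ 2) *
      ‖deriv (fun z => ψ z * f z) z‖) '' unitDisk) with hSdef
    by_cases hSb : BddAbove S
    · -- the element of S at z = a equals |ψ a|
      have hψa : HasDerivAt ψ (deriv ψ a) a :=
        (hψ.differentiableAt (hopen.mem_nhds ha)).hasDerivAt
      have hdenne : (1 : ℂ) - (starRingEnd ℂ) a * a ≠ 0 := den_ne ha' ha'.le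
      have h1 : HasDerivAt (fun z : ℂ => a - z) (-1) a := by
        simpa using ((hasDerivAt_id a).const_sub a)
      have h2 : HasDerivAt (fun z : ℂ => 1 - (starRingEnd ℂ) a * z) (-((starRingEnd ℂ) a)) a := by
        simpa using (((hasDerivAt_id a).const_mul ((starRingEnd ℂ) a)).const_sub 1)
      have hfa : HasDerivAt f
          (((-1) * (1 - (starRingEnd ℂ) a * a) - (a - a) * -((starRingEnd ℂ) a)) /
            (1 - (starRingEnd ℂ) a * a) ^ 2) a := h1.div h2 hdenne
      have hfa0 : f a = 0 := by simp [hfdef]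
      have hmul := (hψa.mul hfa).deriv
      have hEa : (1 - ‖a‖ ^ 2) *
          ‖deriv (fun z => ψ z * f z) a‖ = ‖ψ a‖ := by
        rw [show (fun z => ψ z * f z) = ψ * f from rfl, hmul, hfa0, mul_zero, zero_add]
        have hDf : ((-1) * (1 - (starRingEnd ℂ) a * a) - (a - a) * -((starRingEnd ℂ) a)) /
            (1 - (starRingEnd ℂ) a * a) ^ 2 = -(1 / (1 - (starRingEnd ℂ) a * a)) := by
          field_simp
          ring
        rw [hDf]
        have hca : (1:ℂ) - (starRingEnd ℂ) a * a = ((1 - Complex.normSq a : ℝ) : ℂ) := by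
          rw [mul_comm, Complex.mul_conj]; push_cast; ring
        have hnsa : Complex.normSq a < 1 := by
          rw [← Complex.sq_norm]; nlinarith [norm_nonneg a]
        rw [norm_mul, norm_neg, norm_div, hca, Complex.norm_real, Real.norm_eq_abs, norm_one,
          abs_of_pos (by linarith : (0:ℝ) < 1 - Complex.normSq a), Complex.sq_norm]
        have hne : (1 - Complex.normSq a) ≠ 0 := by linarith
        field_simp
      have hmemS : ‖ψ a‖ ∈ S := by
        rw [← hEa]; exact ⟨a, ha, rfl⟩
      have := le_csSup hSb hmemS
      rw [heq] at this
      exact this.trans hsupub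
    · exfalso
      rw [Real.sSup_of_not_bddAbove hSb] at heq
      have hf0 : ‖f 0‖ ≤ supNorm f := by
        rw [supNorm]
        exact le_csSup hfb ⟨0, h0mem, rfl⟩
      have hf0v : ‖f 0‖ = ‖a‖ := by simp [hfdef]
      rw [hf0v, ← heq] at hf0
      have : ‖a‖ > 0 := by
        simpa using (norm_pos_iff.mpr haz)
      linarith
  -- Step 2: the sup norm m of ψ
  set m : ℝ := supNorm ψ with hmdef
  have himgb : BddAbove ((fun z => ‖ψ z‖) '' unitDisk) := by
    refine ⟨1, ?_⟩; rintro _ ⟨z, hz, rfl⟩; exact key1 z hz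
  have hmle1 : m ≤ 1 := by
    rw [hmdef, supNorm]
    refine csSup_le ⟨_, ⟨0, h0mem, rfl⟩⟩ ?_
    rintro _ ⟨z, hz, rfl⟩; exact key1 z hz
  have hψlem : ∀ z ∈ unitDisk, ‖ψ z‖ ≤ m := by
    intro z hz
    exact le_csSup himgb ⟨z, hz, rfl⟩
  -- Step 3: m > 0
  have hmpos : 0 < m := by
    rcases lt_or_ge 0 m with h | h
    · exact h
    · exfalso
      have hψ0 : ∀ z ∈ unitDisk, ψ z = 0 := by
        intro z hz
        have := hψlem z hz
        have h2 := norm_nonneg (ψ z)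
        have : ‖ψ z‖ = 0 := le_antisymm (this.trans h) h2
        exact norm_eq_zero.mp this
      have hfd : DifferentiableOn ℂ (fun _ : ℂ => (1:ℂ)) unitDisk :=
        (differentiable_const _).differentiableOn
      have hfb : BddAbove ((fun z => ‖(fun _ : ℂ => (1:ℂ)) z‖) '' unitDisk) := by
        refine ⟨1, ?_⟩; rintro _ ⟨z, hz, rfl⟩; simp
      have heq := hiso _ hfd hfb
      have hsup1 : supNorm (fun _ : ℂ => (1:ℂ)) = 1 := by
        rw [supNorm]
        have : ((fun z => ‖(fun _ : ℂ => (1:ℂ)) z‖) '' unitDisk) = {1} := by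
          simpa using Set.Nonempty.image_const ⟨0, h0mem⟩ (1:ℝ)
        rw [this, csSup_singleton]
      have hder : ∀ z ∈ unitDisk, deriv (fun z => ψ z * (1:ℂ)) z = 0 := by
        intro z hz
        have hev : (fun z => ψ z * (1:ℂ)) =ᶠ[nhds z] (fun _ => (0:ℂ)) := by
          filter_upwards [hopen.mem_nhds hz] with y hy
          simp [hψ0 y hy]
        rw [hev.deriv_eq, deriv_const]
      simp only [blochNorm, blochSemi] at heq
      have himg : ((fun z => (1 - ‖z‖ ^ 2) *
          ‖deriv (fun z => ψ z * (1:ℂ)) z‖) '' unitDisk) = {0} := by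
        rw [show ((fun z => (1 - ‖z‖ ^ 2) *
            ‖deriv (fun z => ψ z * (1:ℂ)) z‖) '' unitDisk)
          = ((fun _ : ℂ => (0:ℝ)) '' unitDisk) from
            Set.image_congr fun z hz => by rw [hder z hz]; simp]
        simpa using Set.Nonempty.image_const ⟨0, h0mem⟩ (0:ℝ)
      rw [himg, csSup_singleton, hsup1, h0] at heq
      simp at heq
  -- Step 4: test with f = ψ²
  have hf2d : DifferentiableOn ℂ (fun z => ψ z * ψ z) unitDisk := hψ.mul hψ
  have hf2b : BddAbove ((fun z => ‖(fun z => ψ z * ψ z) z‖) '' unitDisk) := by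
    refine ⟨1, ?_⟩
    rintro _ ⟨z, hz, rfl⟩
    simp only [norm_mul]
    exact mul_le_one₀ (key1 z hz) (norm_nonneg _) (key1 z hz)
  have heq2 := hiso _ hf2d hf2b
  -- supNorm (ψ²) = m²
  have hsup2 : supNorm (fun z => ψ z * ψ z) = m ^ 2 := by
    rw [supNorm]
    apply le_antisymm
    · refine csSup_le ⟨_, ⟨0, h0mem, rfl⟩⟩ ?_
      rintro _ ⟨z, hz, rfl⟩
      simp only [norm_mul]
      have := hψlem z hz
      nlinarith [norm_nonneg (ψ z)]
    · set B := sSup ((fun z => ‖(fun z => ψ z * ψ z) z‖) '' unitDisk) with hBdef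
      have hBnn : 0 ≤ B := by
        have : ‖(fun z => ψ z * ψ z) 0‖ ≤ B := le_csSup hf2b ⟨0, h0mem, rfl⟩
        have h2 := norm_nonneg (ψ 0 * ψ 0)
        simpa using le_trans h2 this
      have hsqle : ∀ z ∈ unitDisk, ‖ψ z‖ ≤ Real.sqrt B := by
        intro z hz
        have h1 : ‖ψ z * ψ z‖ ≤ B := le_csSup hf2b ⟨z, hz, rfl⟩
        rw [norm_mul] at h1
        nlinarith [Real.sq_sqrt hBnn, Real.sqrt_nonneg B, norm_nonneg (ψ z),
          sq_nonneg (‖ψ z‖ - Real.sqrt B)]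
      have hmle : m ≤ Real.sqrt B := by
        rw [hmdef, supNorm]
        refine csSup_le ⟨_, ⟨0, h0mem, rfl⟩⟩ ?_
        rintro _ ⟨z, hz, rfl⟩; exact hsqle z hz
      nlinarith [Real.sq_sqrt hBnn, Real.sqrt_nonneg B]
  simp only [blochNorm, blochSemi] at heq2
  rw [show (ψ 0 * (ψ 0 * ψ 0)) = 0 by rw [h0]; ring, norm_zero, zero_add, hsup2] at heq2
  -- the Bloch sup is bounded using Schwarz–Pick
  have hkey : ∀ δ : ℝ, 0 < δ → m ^ 2 ≤ 3 / 4 * (m + δ) ^ 3 := by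
    intro δ hδ
    rw [← heq2]
    refine csSup_le ⟨_, ⟨0, h0mem, rfl⟩⟩ ?_
    rintro _ ⟨z, hz, rfl⟩
    dsimp only
    have hz' : ‖z‖ < 1 := hmem.mp hz
    have hnsz : 0 ≤ 1 - ‖z‖ ^ 2 := by nlinarith [norm_nonneg z]
    -- derivative of ψ³
    have hdz : HasDerivAt ψ (deriv ψ z) z :=
      (hψ.differentiableAt (hopen.mem_nhds hz)).hasDerivAt
    have hd3 := (hdz.mul (hdz.mul hdz)).deriv
    rw [show (fun z => ψ z * (ψ z * ψ z)) = ψ * (ψ * ψ) from rfl, hd3, Pi.mul_apply]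
    have hexp : deriv ψ z * (ψ z * ψ z) + ψ z * (deriv ψ z * ψ z + ψ z * deriv ψ z)
        = 3 * (ψ z * ψ z) * deriv ψ z := by ring
    rw [hexp]
    have habs3 : ‖3 * (ψ z * ψ z) * deriv ψ z‖
        = 3 * (‖ψ z‖ * ‖ψ z‖) * ‖deriv ψ z‖ := by
      rw [norm_mul, norm_mul, norm_mul]
      norm_num
    rw [habs3]
    -- Schwarz–Pick with radius m + δ
    have hsp := schwarz_pick_s5 (hdisk ▸ hψ) (by linarith : (0:ℝ) < m + δ)
      (fun w hw => lt_of_le_of_lt (hψlem w (hdisk ▸ hw)) (by linarith)) (hdisk ▸ hz)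
    have hc : ‖ψ z‖ ≤ m := hψlem z hz
    have hcnn : 0 ≤ ‖ψ z‖ := norm_nonneg _
    have hdnn : 0 ≤ ‖deriv ψ z‖ := norm_nonneg _
    have hb1 : (1 - ‖z‖ ^ 2) * ‖deriv ψ z‖
        ≤ ((m + δ) ^ 2 - ‖ψ z‖ ^ 2) / (m + δ) := hsp
    have hmd : (0:ℝ) < m + δ := by linarith
    -- final algebra: 3 c² · SP-bound ≤ (3/4)(m+δ)³
    have h4 : 4 * (‖ψ z‖ ^ 2) * ((m + δ) ^ 2 - ‖ψ z‖ ^ 2)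
        ≤ (m + δ) ^ 4 := by nlinarith [sq_nonneg ((m + δ) ^ 2 - 2 * ‖ψ z‖ ^ 2)]
    calc (1 - ‖z‖ ^ 2) *
          (3 * (‖ψ z‖ * ‖ψ z‖) * ‖deriv ψ z‖)
        = 3 * (‖ψ z‖ ^ 2) *
            ((1 - ‖z‖ ^ 2) * ‖deriv ψ z‖) := by ring
      _ ≤ 3 * (‖ψ z‖ ^ 2) *
            (((m + δ) ^ 2 - ‖ψ z‖ ^ 2) / (m + δ)) := by
          apply mul_le_mul_of_nonneg_left hb1 (by positivity)
      _ ≤ 3 / 4 * (m + δ) ^ 3 := by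
          have hrw : 3 * (‖ψ z‖ ^ 2) *
              (((m + δ) ^ 2 - ‖ψ z‖ ^ 2) / (m + δ))
              = 3 * (‖ψ z‖ ^ 2 * ((m + δ) ^ 2 - ‖ψ z‖ ^ 2)) / (m + δ) := by
            ring
          rw [hrw, div_le_iff₀ hmd]
          nlinarith [h4]
  -- conclude
  have hfin := hkey (m ^ 2 / 22) (by positivity)
  have h1 : m + m ^ 2 / 22 ≤ 23 / 22 * m := by nlinarith
  have h2 : (m + m ^ 2 / 22) ^ 3 ≤ (23 / 22 * m) ^ 3 :=
    pow_le_pow_left₀ (by positivity) h1 3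
  have h3 : m ^ 3 ≤ m ^ 2 := by nlinarith
  nlinarith [hfin, h2, h3, pow_pos hmpos 2, pow_pos hmpos 3]
end

section
/- If φ is a holomorphic self-map of the unit disk such that the composition operator C_φ f = f∘φ is an isometry from H^∞(𝔻) into the Bloch space 𝓑(𝔻), then φ(0) = 0. -/
open Metric Filter

lemma unitDisk_open : IsOpen unitDisk := isOpen_ball

lemma mem_unitDisk {z : ℂ} : z ∈ unitDisk ↔ ‖z‖ < 1 := by
  simp [unitDisk, Complex.dist_eq]

lemma aux_diffOn (c : ℂ) : DifferentiableOn ℂ (fun z => (1 + c*z)/2) unitDisk := by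
  apply Differentiable.differentiableOn
  fun_prop

lemma aux_bdd (c : ℂ) (hc : ‖c‖ = 1) :
    (1 : ℝ) ∈ upperBounds ((fun z => ‖(1 + c*z)/2‖) '' unitDisk) := by
  rintro x ⟨z, hz, rfl⟩
  rw [mem_unitDisk] at hz
  have h1 : ‖1 + c*z‖ ≤ 2 := by
    calc ‖1 + c*z‖ ≤ ‖1‖ + ‖c*z‖ :=
          norm_add_le _ _
      _ = 1 + ‖z‖ := by simp [map_mul, hc]
      _ ≤ 2 := by linarith
  show ‖(1 + c*z)/2‖ ≤ 1
  rw [norm_div]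
  have h2 : ‖(2 : ℂ)‖ = 2 := by norm_num
  rw [h2]
  linarith

lemma aux_supNorm (c : ℂ) (hc : ‖c‖ = 1) :
    supNorm (fun z => (1 + c*z)/2) = 1 := by
  have hc0 : c ≠ 0 := by
    intro h; rw [h] at hc; simp at hc
  have hne : ((fun z => ‖(1 + c*z)/2‖) '' unitDisk).Nonempty :=
    ⟨_, ⟨0, by simp [mem_unitDisk], rfl⟩⟩
  have hbdd : BddAbove ((fun z => ‖(1 + c*z)/2‖) '' unitDisk) :=
    ⟨1, aux_bdd c hc⟩
  unfold supNorm
  apply le_antisymm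
  · exact csSup_le hne (aux_bdd c hc)
  · rw [le_csSup_iff hbdd hne]
    intro b hb
    by_contra hlt
    push_neg at hlt
    set r : ℝ := max b 0 with hr
    have hr0 : 0 ≤ r := le_max_right _ _
    have hr1 : r < 1 := max_lt hlt one_pos
    have hrb : b ≤ r := le_max_left _ _
    have hzmem : ((r : ℂ) * c⁻¹) ∈ unitDisk := by
      rw [mem_unitDisk, norm_mul, norm_inv, hc, Complex.norm_of_nonneg hr0]
      simpa using hr1
    have hval : (fun z => ‖(1 + c*z)/2‖) ((r : ℂ) * c⁻¹) = (1 + r)/2 := by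
      have : c * ((r : ℂ) * c⁻¹) = (r : ℂ) := by
        field_simp
      simp only [this]
      have : ((1 : ℂ) + (r : ℂ))/2 = (((1 + r)/2 : ℝ) : ℂ) := by push_cast; ring
      rw [this, Complex.norm_of_nonneg (by linarith)]
    have hmem : (1 + r)/2 ∈ (fun z => ‖(1 + c*z)/2‖) '' unitDisk :=
      ⟨_, hzmem, hval⟩
    have := hb hmem
    linarith

lemma aux_blochSemi (φ : ℂ → ℂ) (hφ : DifferentiableOn ℂ φ unitDisk)
    (c : ℂ) (hc : ‖c‖ = 1) :
    blochSemi ((fun z => (1 + c*z)/2) ∘ φ) =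
      sSup ((fun z => (1 - ‖z‖ ^ 2) * (‖deriv φ z‖ / 2)) '' unitDisk) := by
  unfold blochSemi
  congr 1
  apply Set.image_congr
  intro z hz
  have hd : DifferentiableAt ℂ φ z :=
    hφ.differentiableAt (unitDisk_open.mem_nhds hz)
  have hder : HasDerivAt ((fun z => (1 + c*z)/2) ∘ φ) (c * deriv φ z / 2) z := by
    exact ((hd.hasDerivAt.const_mul c).const_add 1).div_const 2
  rw [hder.deriv, norm_div, norm_mul, hc, one_mul]
  norm_num

theorem stmt_7 (φ : ℂ → ℂ) (hφ : DifferentiableOn ℂ φ unitDisk)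
    (hφm : Set.MapsTo φ unitDisk unitDisk)
    (hiso : ∀ f : ℂ → ℂ, DifferentiableOn ℂ f unitDisk →
      BddAbove ((fun z => ‖f z‖) '' unitDisk) →
      blochNorm (f ∘ φ) = supNorm f) :
    φ 0 = 0 := by
  set a := φ 0 with ha
  have key : ∀ c : ℂ, ‖c‖ = 1 →
      ‖(1 + c * a)/2‖ +
        sSup ((fun z => (1 - ‖z‖ ^ 2) * (‖deriv φ z‖ / 2)) '' unitDisk)
        = 1 := by
    intro c hc
    have := hiso (fun z => (1 + c*z)/2) (aux_diffOn c) ⟨1, aux_bdd c hc⟩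
    rw [aux_supNorm c hc] at this
    unfold blochNorm at this
    rw [aux_blochSemi φ hφ c hc] at this
    simpa [ha] using this
  have h1 := key 1 (by simp)
  simp only [one_mul] at h1
  have h2 := key (-1) (by simp)
  have h3 := key Complex.I (by simp)
  have h4 := key (-Complex.I) (by simp)
  have e1 : ‖(1 + a)/2‖ = ‖(1 - a)/2‖ := by
    have : (1 + (-1) * a)/2 = ((1 : ℂ) - a)/2 := by ring
    rw [this] at h2; linarith
  have e2 : ‖(1 + Complex.I * a)/2‖ = ‖(1 - Complex.I * a)/2‖ := by
    have : (1 + (-Complex.I) * a)/2 = ((1 : ℂ) - Complex.I * a)/2 := by ring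
    rw [this] at h4; linarith
  have e1' : ‖1 + a‖ = ‖1 - a‖ := by
    rw [norm_div, norm_div] at e1
    have h2 : ‖(2 : ℂ)‖ = 2 := by norm_num
    rw [h2] at e1
    linarith
  have e2' : ‖1 + Complex.I * a‖ = ‖1 - Complex.I * a‖ := by
    rw [norm_div, norm_div] at e2
    have h2 : ‖(2 : ℂ)‖ = 2 := by norm_num
    rw [h2] at e2
    linarith
  have q1 : Complex.normSq (1 + a) = Complex.normSq (1 - a) := by
    have := congrArg (· ^ 2) e1'
    simpa [Complex.sq_norm] using this
  have q2 : Complex.normSq (1 + Complex.I * a) = Complex.normSq (1 - Complex.I * a) := by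
    have := congrArg (· ^ 2) e2'
    simpa [Complex.sq_norm] using this
  have hre : a.re = 0 := by
    simp only [Complex.normSq_apply, Complex.add_re, Complex.add_im, Complex.sub_re,
      Complex.sub_im, Complex.one_re, Complex.one_im] at q1
    nlinarith [q1]
  have him : a.im = 0 := by
    simp only [Complex.normSq_apply, Complex.add_re, Complex.add_im, Complex.sub_re,
      Complex.sub_im, Complex.one_re, Complex.one_im, Complex.mul_re, Complex.mul_im,
      Complex.I_re, Complex.I_im] at q2
    nlinarith [q2]
  exact Complex.ext hre him
end

section
/- There is no holomorphic self-map φ of the unit disk such that the composition operator C_φ f = f∘φ is an isometry from H^∞(𝔻) (sup norm) into the Bloch space 𝓑(𝔻) (norm |g(0)| + sup_z (1-|z|²)|g'(z)|). -/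
open Metric Filter

section Aux

open Complex Set

noncomputable def mob (a : ℂ) : ℂ → ℂ := fun z => (a - z) / (1 - (starRingEnd ℂ) a * z)

lemma mem_disk {z : ℂ} : z ∈ ball (0:ℂ) 1 ↔ ‖z‖ < 1 := by
  rw [mem_ball_zero_iff]

lemma normSq_id' (a z : ℂ) : normSq (1 - (starRingEnd ℂ) a * z) - normSq (a - z)
    = (1 - normSq a) * (1 - normSq z) := by
  simp only [normSq_apply, sub_re, sub_im, one_re, one_im, mul_re, mul_im, conj_re, conj_im]
  ring

lemma denom_ne {a z : ℂ} (ha : ‖a‖ < 1) (hz : ‖z‖ < 1) :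
    1 - (starRingEnd ℂ) a * z ≠ 0 := by
  intro h
  have h1 : (1 : ℂ) = (starRingEnd ℂ) a * z := by linear_combination h
  have : (1 : ℝ) = ‖a‖ * ‖z‖ := by
    have := congrArg (fun w : ℂ => ‖w‖) h1
    simpa [map_mul] using this
  nlinarith [norm_nonneg a, norm_nonneg z]

lemma mob_mapsTo {a : ℂ} (ha : ‖a‖ < 1) : MapsTo (mob a) (ball 0 1) (ball 0 1) := by
  intro z hz
  rw [mem_disk] at *
  have hden := denom_ne ha hz
  have hd2 : 0 < normSq (1 - (starRingEnd ℂ) a * z) := normSq_pos.2 hden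
  have hlt : normSq (a - z) < normSq (1 - (starRingEnd ℂ) a * z) := by
    have h1 : normSq a < 1 := by rw [← Complex.sq_norm]; nlinarith [norm_nonneg a]
    have h2 : normSq z < 1 := by rw [← Complex.sq_norm]; nlinarith [norm_nonneg z]
    nlinarith [normSq_id' a z]
  rw [mob, norm_div, div_lt_one ((norm_pos_iff.mpr hden))]
  rw [Complex.norm_def, Complex.norm_def]
  exact Real.sqrt_lt_sqrt (normSq_nonneg _) hlt

lemma mob_hasDerivAt {a z : ℂ} (ha : ‖a‖ < 1) (hz : ‖z‖ < 1) :
    HasDerivAt (mob a) (((normSq a : ℂ) - 1) / (1 - (starRingEnd ℂ) a * z)^2) z := by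
  have h1 : HasDerivAt (fun z : ℂ => a - z) (-1) z := (hasDerivAt_id z).const_sub a
  have h2 : HasDerivAt (fun z : ℂ => 1 - (starRingEnd ℂ) a * z) (-((starRingEnd ℂ) a * 1)) z :=
    ((hasDerivAt_id z).const_mul ((starRingEnd ℂ) a)).const_sub 1
  have hden := denom_ne ha hz
  have h := h1.div h2 hden
  have hc : (starRingEnd ℂ) a * a = (normSq a : ℂ) := by rw [mul_comm, Complex.mul_conj]
  refine (h : HasDerivAt (mob a) _ z).congr_deriv ?_
  linear_combination hc / (1 - (starRingEnd ℂ) a * z)^2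

lemma mob_diffOn {a : ℂ} (ha : ‖a‖ < 1) : DifferentiableOn ℂ (mob a) (ball 0 1) :=
  fun z hz => (mob_hasDerivAt ha (mem_disk.1 hz)).differentiableAt.differentiableWithinAt

theorem schwarzPick {φ : ℂ → ℂ} (hd : DifferentiableOn ℂ φ (ball 0 1))
    (hm : MapsTo φ (ball 0 1) (ball 0 1)) {z₀ : ℂ} (hz₀ : z₀ ∈ ball (0:ℂ) 1) :
    (1 - ‖z₀‖ ^ 2) * ‖deriv φ z₀‖ ≤ 1 - ‖φ z₀‖ ^ 2 := by
  set w₀ := φ z₀ with hw₀def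
  have hz₀' : ‖z₀‖ < 1 := mem_disk.1 hz₀
  have hw₀ : w₀ ∈ ball (0:ℂ) 1 := hm hz₀
  have hw₀' : ‖w₀‖ < 1 := mem_disk.1 hw₀
  set g := mob w₀ ∘ (φ ∘ mob z₀) with hg
  have hmz : MapsTo (mob z₀) (ball 0 1) (ball 0 1) := mob_mapsTo hz₀'
  have hmw : MapsTo (mob w₀) (ball 0 1) (ball 0 1) := mob_mapsTo hw₀'
  have hgd : DifferentiableOn ℂ g (ball 0 1) :=
    (mob_diffOn hw₀').comp ((hd.comp (mob_diffOn hz₀') hmz)) (hm.comp hmz)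
  have hgm : MapsTo g (ball 0 1) (ball 0 1) := hmw.comp (hm.comp hmz)
  have hσ0 : mob z₀ 0 = z₀ := by simp [mob]
  have hσw : mob w₀ w₀ = 0 := by simp [mob]
  have hg0 : g 0 = 0 := by show mob w₀ (φ (mob z₀ 0)) = 0; rw [hσ0]; exact hσw
  have h1 : HasDerivAt (mob z₀) ((normSq z₀ : ℂ) - 1) 0 := by
    have := mob_hasDerivAt hz₀' (by simpa using one_pos : ‖(0:ℂ)‖ < 1)
    simpa using this
  have h2 : HasDerivAt φ (deriv φ z₀) (mob z₀ 0) := by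
    rw [hσ0]
    exact (hd.differentiableAt (isOpen_ball.mem_nhds hz₀)).hasDerivAt
  have h3 : HasDerivAt (mob w₀) (((normSq w₀ : ℂ) - 1) / (1 - (normSq w₀ : ℂ))^2)
      ((φ ∘ mob z₀) 0) := by
    have := mob_hasDerivAt hw₀' hw₀'
    have hcw : (starRingEnd ℂ) w₀ * w₀ = (normSq w₀ : ℂ) := by rw [mul_comm, Complex.mul_conj]
    rw [Function.comp_apply, hσ0, ← hw₀def]
    simpa [hcw] using this
  have hchain : HasDerivAt g
      (((normSq w₀ : ℂ) - 1) / (1 - (normSq w₀ : ℂ))^2 * (deriv φ z₀ * ((normSq z₀ : ℂ) - 1))) 0 :=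
    h3.comp 0 (h2.comp 0 h1)
  have hschwarz : ‖deriv g 0‖ ≤ 1 :=
    Complex.norm_deriv_le_one_of_mapsTo_ball hgd (by rw [hg0]; exact hgm.mono_right ball_subset_closedBall) one_pos
  rw [hchain.deriv] at hschwarz
  have hnz : normSq z₀ = ‖z₀‖ ^ 2 := (Complex.sq_norm z₀).symm
  have hnw : normSq w₀ = ‖w₀‖ ^ 2 := (Complex.sq_norm w₀).symm
  have hwlt : normSq w₀ < 1 := by rw [hnw]; nlinarith [norm_nonneg w₀]
  have hzlt : normSq z₀ < 1 := by rw [hnz]; nlinarith [norm_nonneg z₀]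
  have habs : (1 - normSq w₀)⁻¹ * (‖deriv φ z₀‖ * (1 - normSq z₀)) ≤ 1 := by
    have e1 : ‖(normSq w₀ : ℂ) - 1‖ = 1 - normSq w₀ := by
      rw [show ((normSq w₀ : ℂ) - 1) = ((normSq w₀ - 1 : ℝ) : ℂ) by push_cast; ring,
        Complex.norm_real, Real.norm_eq_abs, abs_of_nonpos (by linarith)]; ring
    have e2 : ‖(normSq z₀ : ℂ) - 1‖ = 1 - normSq z₀ := by
      rw [show ((normSq z₀ : ℂ) - 1) = ((normSq z₀ - 1 : ℝ) : ℂ) by push_cast; ring,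
        Complex.norm_real, Real.norm_eq_abs, abs_of_nonpos (by linarith)]; ring
    have e3 : ‖(1 - (normSq w₀ : ℂ))^2‖ = (1 - normSq w₀)^2 := by
      rw [norm_pow, show ((1:ℂ) - (normSq w₀ : ℂ)) = ((1 - normSq w₀ : ℝ) : ℂ) by push_cast; ring,
        Complex.norm_real, Real.norm_eq_abs, _root_.sq_abs]
    rw [norm_mul, norm_div, norm_mul, e1, e2, e3] at hschwarz
    calc (1 - normSq w₀)⁻¹ * (‖deriv φ z₀‖ * (1 - normSq z₀))
        = (1 - normSq w₀) / (1 - normSq w₀)^2 * (‖deriv φ z₀‖ * (1 - normSq z₀)) := by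
          rw [sq]; field_simp
      _ ≤ 1 := hschwarz
  have hpos : 0 < 1 - normSq w₀ := by linarith
  rw [← hnz, ← hnw]
  calc (1 - normSq z₀) * ‖deriv φ z₀‖
      = (1 - normSq w₀) * ((1 - normSq w₀)⁻¹ * (‖deriv φ z₀‖ * (1 - normSq z₀))) := by
        field_simp
    _ ≤ (1 - normSq w₀) * 1 := mul_le_mul_of_nonneg_left habs hpos.le
    _ = 1 - normSq w₀ := mul_one _

lemma sSup_image_eq {g : ℂ → ℝ} {c : ℝ} (hc : 0 ≤ c) (hub : ∀ z ∈ ball (0:ℂ) 1, g z ≤ c)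
    (hlb : ∀ t, t < c → ∃ z ∈ ball (0:ℂ) 1, t < g z) : sSup (g '' ball (0:ℂ) 1) = c := by
  have hbdd : BddAbove (g '' ball (0:ℂ) 1) :=
    ⟨c, by rintro x ⟨z, hz, rfl⟩; exact hub z hz⟩
  apply le_antisymm
  · exact Real.sSup_le (by rintro x ⟨z, hz, rfl⟩; exact hub z hz) hc
  · refine le_of_forall_lt fun t ht => ?_
    obtain ⟨z, hz, hgz⟩ := hlb t ht
    exact hgz.trans_le (le_csSup hbdd ⟨z, hz, rfl⟩)

end Aux

open Complex Set in
theorem stmt_8 :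
    ¬ ∃ φ : ℂ → ℂ, DifferentiableOn ℂ φ unitDisk ∧ Set.MapsTo φ unitDisk unitDisk ∧
      ∀ f : ℂ → ℂ, DifferentiableOn ℂ f unitDisk →
        BddAbove ((fun z => ‖f z‖) '' unitDisk) →
        blochNorm (f ∘ φ) = supNorm f := by
  rintro ⟨φ, hd, hm, hiso⟩
  rw [show unitDisk = ball (0:ℂ) 1 from rfl] at hd hm
  have h0B : (0:ℂ) ∈ ball (0:ℂ) 1 := mem_ball_self one_pos
  have haB : φ 0 ∈ ball (0:ℂ) 1 := hm h0B
  have ha1 : ‖φ 0‖ < 1 := mem_disk.1 haB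
  -- Step 1: apply the isometry identity to f = id.
  have hsup_id : supNorm (fun z => z) = 1 := by
    rw [supNorm, show unitDisk = ball (0:ℂ) 1 from rfl]
    apply sSup_image_eq zero_le_one
    · exact fun z hz => (mem_disk.1 hz).le
    · intro t ht
      have h1 : max t 0 < 1 := max_lt ht one_pos
      have h2 := le_max_left t 0
      have h3 := le_max_right t 0
      refine ⟨(((max t 0 + 1)/2 : ℝ) : ℂ), ?_, ?_⟩
      · rw [mem_disk, Complex.norm_real, Real.norm_eq_abs, _root_.abs_of_nonneg (by linarith)]
        linarith
      · rw [Complex.norm_real, Real.norm_eq_abs, _root_.abs_of_nonneg (by linarith)]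
        linarith
  have hEq1 : ‖φ 0‖ + blochSemi φ = 1 := by
    have h := hiso (fun z => z) differentiable_fun_id.differentiableOn
      ⟨1, by rintro x ⟨z, hz, rfl⟩; exact (mem_disk.1 hz).le⟩
    rw [hsup_id] at h
    exact h
  -- Step 2: φ 0 = 0.
  have ha0 : φ 0 = 0 := by
    by_contra hne
    set lam : ℂ := φ 0 / (‖φ 0‖ : ℂ) with hlam_def
    have habs_ne : (‖φ 0‖ : ℝ) ≠ 0 := norm_ne_zero_iff.mpr hne
    have hlam : ‖lam‖ = 1 := by
      rw [hlam_def, norm_div, Complex.norm_real, Real.norm_eq_abs,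
        _root_.abs_of_nonneg (norm_nonneg _), div_self habs_ne]
    set f₃ : ℂ → ℂ := fun z => 1 - (starRingEnd ℂ) lam * z with hf₃
    have hd₃ : DifferentiableOn ℂ f₃ unitDisk :=
      ((differentiable_const _).sub
        ((differentiable_const _).mul differentiable_fun_id)).differentiableOn
    have hub₃ : ∀ z ∈ ball (0:ℂ) 1, ‖f₃ z‖ ≤ 2 := by
      intro z hz
      have h1 := norm_sub_le (1:ℂ) ((starRingEnd ℂ) lam * z)
      simp only [norm_mul, Complex.norm_conj, hlam, one_mul,
        norm_one] at h1
      have := mem_disk.1 hz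
      calc ‖f₃ z‖ ≤ 1 + ‖z‖ := h1
        _ ≤ 2 := by linarith
    have hll : (starRingEnd ℂ) lam * lam = 1 := by
      rw [mul_comm, Complex.mul_conj]
      have : normSq lam = 1 := by rw [← Complex.sq_norm, hlam]; norm_num
      rw [this]; norm_num
    have hsup₃ : supNorm f₃ = 2 := by
      rw [supNorm, show unitDisk = ball (0:ℂ) 1 from rfl]
      apply sSup_image_eq (by norm_num) hub₃
      intro t ht
      set r : ℝ := (max (t-1) 0 + 1)/2 with hr_def
      have hm0 := le_max_right (t-1) 0
      have hm1 := le_max_left (t-1) 0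
      have hmax1 : max (t-1) 0 < 1 := max_lt (by linarith) one_pos
      have hr0 : 0 ≤ r := by rw [hr_def]; linarith
      have hr1 : r < 1 := by rw [hr_def]; linarith
      refine ⟨-(r:ℂ) * lam, ?_, ?_⟩
      · rw [mem_disk, norm_mul, hlam, mul_one, norm_neg, Complex.norm_real, Real.norm_eq_abs,
          _root_.abs_of_nonneg hr0]
        exact hr1
      · have hval : f₃ (-(r:ℂ) * lam) = ((1 + r : ℝ) : ℂ) := by
          rw [hf₃]
          push_cast
          linear_combination (r:ℂ) * hll
        rw [hval, Complex.norm_real, Real.norm_eq_abs, _root_.abs_of_nonneg (by linarith)]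
        rcases le_or_gt t 1 with h | h
        · linarith
        · have : max (t-1) 0 = t - 1 := max_eq_left (by linarith)
          rw [hr_def, this]; linarith
    have h₃ := hiso f₃ hd₃ ⟨2, by rintro x ⟨z, hz, rfl⟩; exact hub₃ z hz⟩
    rw [hsup₃] at h₃
    have hval0 : ‖(f₃ ∘ φ) 0‖ = 1 - ‖φ 0‖ := by
      have hca : (starRingEnd ℂ) lam * φ 0 = ((‖φ 0‖ : ℝ) : ℂ) := by
        have h1 : (starRingEnd ℂ) (φ 0) * φ 0 = ((‖φ 0‖ ^ 2 : ℝ) : ℂ) := by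
          rw [mul_comm, Complex.mul_conj, Complex.sq_norm]
        rw [hlam_def, map_div₀, Complex.conj_ofReal, div_mul_eq_mul_div, h1,
          div_eq_iff (by exact_mod_cast habs_ne)]
        push_cast
        ring
      have : (f₃ ∘ φ) 0 = ((1 - ‖φ 0‖ : ℝ) : ℂ) := by
        show f₃ (φ 0) = _
        rw [hf₃]
        push_cast
        linear_combination -hca
      rw [this, Complex.norm_real, Real.norm_eq_abs, _root_.abs_of_nonneg (by linarith)]
    have hsemi : blochSemi (f₃ ∘ φ) = blochSemi φ := by
      rw [blochSemi, blochSemi]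
      congr 1
      apply Set.image_congr
      intro z hz
      have hφz : HasDerivAt φ (deriv φ z) z :=
        (hd.differentiableAt (isOpen_ball.mem_nhds hz)).hasDerivAt
      have hcd : HasDerivAt (f₃ ∘ φ) (-((starRingEnd ℂ) lam * deriv φ z)) z := by
        rw [hf₃]
        exact (hφz.const_mul ((starRingEnd ℂ) lam)).const_sub 1
      rw [hcd.deriv, norm_neg, norm_mul, Complex.norm_conj, hlam, one_mul]
    rw [blochNorm, hval0, hsemi] at h₃
    have : ‖φ 0‖ = 0 := by linarith
    exact hne (norm_eq_zero.1 this)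
  -- Step 3: apply the isometry identity to f = z ^ 2 and use Schwarz–Pick.
  have hub₂ : ∀ z ∈ ball (0:ℂ) 1, ‖z^2‖ ≤ 1 := by
    intro z hz
    rw [norm_pow]
    have h1 := mem_disk.1 hz
    have h0 := norm_nonneg z
    nlinarith
  have hsup₂ : supNorm (fun z => z^2) = 1 := by
    rw [supNorm, show unitDisk = ball (0:ℂ) 1 from rfl]
    apply sSup_image_eq zero_le_one hub₂
    intro t ht
    set s : ℝ := Real.sqrt (max t 0) with hs_def
    have hs0 : 0 ≤ s := Real.sqrt_nonneg _
    have hs1 : s < 1 := by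
      rw [hs_def, show (1:ℝ) = Real.sqrt 1 from Real.sqrt_one.symm]
      exact Real.sqrt_lt_sqrt (le_max_right t 0) (max_lt ht one_pos)
    have hssq : s^2 = max t 0 := Real.sq_sqrt (le_max_right t 0)
    refine ⟨(((s + 1)/2 : ℝ) : ℂ), ?_, ?_⟩
    · rw [mem_disk, Complex.norm_real, Real.norm_eq_abs, _root_.abs_of_nonneg (by linarith)]
      linarith
    · rw [norm_pow, Complex.norm_real, Real.norm_eq_abs, _root_.abs_of_nonneg (by linarith)]
      have h2 := le_max_left t 0
      nlinarith
  have h₂ := hiso (fun z => z^2) (differentiable_pow 2).differentiableOn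
    ⟨1, by rintro x ⟨z, hz, rfl⟩; exact hub₂ z hz⟩
  rw [hsup₂] at h₂
  have hval0 : ‖((fun z => z^2) ∘ φ) 0‖ = 0 := by
    show ‖(φ 0)^2‖ = 0
    rw [ha0]; simp
  have hsemi : blochSemi ((fun z => z^2) ∘ φ) ≤ 7/9 := by
    rw [blochSemi]
    apply Real.sSup_le _ (by norm_num)
    rintro x ⟨z, hz, rfl⟩
    have hzB : z ∈ ball (0:ℂ) 1 := hz
    have hφz : HasDerivAt φ (deriv φ z) z :=
      (hd.differentiableAt (isOpen_ball.mem_nhds hzB)).hasDerivAt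
    have hcd : HasDerivAt ((fun z => z^2) ∘ φ) ((2:ℕ) * φ z ^ 1 * deriv φ z) z := hφz.pow 2
    have hsp := schwarzPick hd hm hzB
    have ht1 : ‖φ z‖ < 1 := mem_disk.1 (hm hzB)
    have ht0 : (0:ℝ) ≤ ‖φ z‖ := norm_nonneg _
    have hz1 : ‖z‖ < 1 := mem_disk.1 hzB
    have hz0 : (0:ℝ) ≤ ‖z‖ := norm_nonneg _
    have habs : ‖(2:ℕ) * φ z ^ 1 * deriv φ z‖
        = 2 * ‖φ z‖ * ‖deriv φ z‖ := by
      simp [map_mul]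
    dsimp only
    rw [hcd.deriv, habs]
    set t := ‖φ z‖
    calc (1 - ‖z‖ ^ 2) * (2 * t * ‖deriv φ z‖)
        = 2 * t * ((1 - ‖z‖ ^ 2) * ‖deriv φ z‖) := by ring
      _ ≤ 2 * t * (1 - t^2) := mul_le_mul_of_nonneg_left hsp (by positivity)
      _ ≤ 7/9 := by nlinarith [sq_nonneg (t - 577/1000), sq_nonneg t, sq_nonneg (t+1)]
  rw [blochNorm, hval0] at h₂
  linarith
end

section
/- There is no pair (ψ, φ) with ψ holomorphic and bounded on 𝔻 and φ a holomorphic self-map of 𝔻 such that W_{ψ,φ} g = ψ·(g∘φ) is an isometry from the Bloch space 𝓑(𝔻) into H^∞(𝔻), provided W_{ψ,φ} is bounded, i.e., sup_{z∈𝔻}|ψ(z)| log(2/(1-|φ(z)|)) < ∞. (One-dimensional case, n = 1, of the polydisk theorem.) -/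
open Metric Filter

theorem stmt_19 :
    ¬ ∃ (ψ φ : ℂ → ℂ), DifferentiableOn ℂ ψ unitDisk ∧
      BddAbove ((fun z => ‖ψ z‖) '' unitDisk) ∧
      DifferentiableOn ℂ φ unitDisk ∧ Set.MapsTo φ unitDisk unitDisk ∧
      BddAbove ((fun z => ‖ψ z‖ * Real.log (2 / (1 - ‖φ z‖))) ''
        unitDisk) ∧
      ∀ g : ℂ → ℂ, DifferentiableOn ℂ g unitDisk →
        BddAbove ((fun z => (1 - ‖z‖ ^ 2) * ‖deriv g z‖) '' unitDisk) →
        supNorm (fun z => ψ z * g (φ z)) = blochNorm g := by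
  rintro ⟨ψ, φ, hψd, hψb, hφd, hφm, ⟨M₀, hM₀⟩, hiso⟩
  have h0 : (0:ℂ) ∈ unitDisk := by simp [unitDisk]
  -- Test on g = 1 : sup |ψ| = 1
  have hψsup : sSup ((fun z => ‖ψ z‖) '' unitDisk) = 1 := by
    have hbdd0 : BddAbove ((fun z => (1 - ‖z‖ ^ 2) *
        ‖deriv (fun _ : ℂ => (1:ℂ)) z‖) '' unitDisk) := by
      refine ⟨0, ?_⟩
      rintro x ⟨z, hz, rfl⟩
      simp
    have h1 := hiso (fun _ => (1:ℂ)) (differentiableOn_const 1) hbdd0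
    have himg : ((fun z => (1 - ‖z‖ ^ 2) *
        ‖deriv (fun _ : ℂ => (1:ℂ)) z‖) '' unitDisk) = {0} := by
      have : (fun z : ℂ => (1 - ‖z‖ ^ 2) *
          ‖deriv (fun _ : ℂ => (1:ℂ)) z‖) = fun _ => (0:ℝ) := by
        funext z; simp
      rw [this]
      exact Set.Nonempty.image_const ⟨0, h0⟩ 0
    have hsemi : blochSemi (fun _ : ℂ => (1:ℂ)) = 0 := by
      rw [blochSemi, himg]; simp
    have hbn : blochNorm (fun _ : ℂ => (1:ℂ)) = 1 := by
      simp [blochNorm, hsemi]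
    have himg2 : ((fun z => ‖ψ z * (fun _ : ℂ => (1:ℂ)) (φ z)‖) '' unitDisk)
        = ((fun z => ‖ψ z‖) '' unitDisk) := by
      funext z; simp
    rw [supNorm, himg2, hbn] at h1
    exact h1
  -- Test on g = id : sup |psi phi| = 1
  have hφψsup : sSup ((fun z => ‖ψ z * φ z‖) '' unitDisk) = 1 := by
    have hder : ∀ z : ℂ, deriv (fun w : ℂ => w) z = 1 := fun z => deriv_id z
    have hbdd : BddAbove ((fun z => (1 - ‖z‖ ^ 2) *
        ‖deriv (fun w : ℂ => w) z‖) '' unitDisk) := by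
      refine ⟨1, ?_⟩
      rintro x ⟨z, hz, rfl⟩
      simp only [hder, norm_one, mul_one]
      nlinarith [sq_nonneg (‖z‖)]
    have h1 := hiso (fun w => w) differentiable_id.differentiableOn hbdd
    have hsemi : blochSemi (fun w : ℂ => w) = 1 := by
      rw [blochSemi]
      apply le_antisymm
      · refine csSup_le (Set.Nonempty.image _ ⟨0, h0⟩) ?_
        rintro x ⟨z, hz, rfl⟩
        simp only [hder, norm_one, mul_one]
        nlinarith [sq_nonneg (‖z‖)]
      · exact le_csSup hbdd ⟨0, h0, by simp [hder]⟩
    have hbn : blochNorm (fun w : ℂ => w) = 1 := by simp [blochNorm, hsemi]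
    have h2 := h1.trans hbn
    simpa [supNorm] using h2
  -- the bound M
  set M : ℝ := max M₀ 1 with hMdef
  have hM1 : (1:ℝ) ≤ M := le_max_right _ _
  have hM : ∀ z ∈ unitDisk, ‖ψ z‖ * Real.log (2 / (1 - ‖φ z‖)) ≤ M :=
    fun z hz => le_trans (hM₀ ⟨z, hz, rfl⟩) (le_max_left _ _)
  set c : ℝ := max (1/4 : ℝ) (1 - 2 * Real.exp (-(4 * M))) with hcdef
  have hc : c < 1 := by
    apply max_lt (by norm_num)
    have := Real.exp_pos (-(4 * M))
    linarith
  have hub : ∀ z ∈ unitDisk, ‖ψ z * φ z‖ ≤ c := by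
    intro z hz
    have hφz : ‖φ z‖ < 1 := by
      have := hφm hz
      simpa [unitDisk, Complex.norm_def] using this
    have hψz : ‖ψ z‖ ≤ 1 := hψsup ▸ le_csSup hψb ⟨z, hz, rfl⟩
    rw [norm_mul]
    by_cases hcase : ‖φ z‖ ≤ 1 - 2 * Real.exp (-(4 * M))
    · have h1 : ‖ψ z‖ * ‖φ z‖ ≤ ‖φ z‖ :=
        mul_le_of_le_one_left (norm_nonneg _) hψz
      exact le_trans (le_trans h1 hcase) (le_max_right _ _)
    · push_neg at hcase
      have h1 : 0 < 1 - ‖φ z‖ := by linarith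
      have h2 : 1 - ‖φ z‖ < 2 * Real.exp (-(4 * M)) := by linarith
      have h3 : Real.exp (4 * M) ≤ 2 / (1 - ‖φ z‖) := by
        rw [le_div_iff₀ h1]
        have hprod : Real.exp (4 * M) * Real.exp (-(4 * M)) = 1 := by
          rw [← Real.exp_add]; simp
        nlinarith [Real.exp_pos (4 * M)]
      have h4 : (4 * M : ℝ) ≤ Real.log (2 / (1 - ‖φ z‖)) := by
        calc (4 * M : ℝ) = Real.log (Real.exp (4 * M)) := (Real.log_exp _).symm
        _ ≤ _ := Real.log_le_log (Real.exp_pos _) h3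
      have h5 : ‖ψ z‖ * (4 * M) ≤ M :=
        le_trans (mul_le_mul_of_nonneg_left h4 (norm_nonneg _)) (hM z hz)
      have hψsmall : ‖ψ z‖ ≤ 1/4 := by nlinarith
      have : ‖ψ z‖ * ‖φ z‖ ≤ 1/4 := by
        nlinarith [norm_nonneg (φ z), norm_nonneg (ψ z)]
      exact le_trans this (le_max_left _ _)
  have : (1:ℝ) ≤ c := by
    rw [← hφψsup]
    refine csSup_le (Set.Nonempty.image _ ⟨0, h0⟩) ?_
    rintro x ⟨z, hz, rfl⟩
    exact hub z hz
  linarith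
end
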